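/- Let U be a finite set of unit vectors in ℝⁿ with pos(U) = ℝⁿ, and let U' ⊆ U be a linear basis of ℝⁿ. Then there exist linearly independent vectors x₁,…,x_k ∈ U \ U' with k ≤ n such that pos(U' ∪ {x₁,…,x_k}) = ℝⁿ; in particular the resulting positively spanning subset has at most 2n elements. -/

import Mathlib

noncomputable section

def pos {E : Type*} [AddCommMonoid E] [Module ℝ E] (M : Set E) : Set E :=
  {x | ∃ (s : Finset E) (c : E → ℝ),
    (↑s : Set E) ⊆ M ∧ (∀ v, 0 ≤ c v) ∧ x = ∑ v ∈ s, c v • v}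

variable {E : Type*} [AddCommGroup E] [Module ℝ E] [DecidableEq E]

/-- Conical Carathéodory-type reduction relative to a fixed base finset `B`. -/
lemma reduce_aux (N : ℕ) : ∀ (t : Finset (E)), t.card ≤ N → ∀ (B : Finset (E)) (c : E → ℝ) (y : E),
    Disjoint B t → (∀ v, 0 ≤ c v) → y = ∑ v ∈ B ∪ t, c v • v →
    ∃ t' : Finset (E), t' ⊆ t ∧
      LinearIndependent ℝ (fun v : {x // x ∈ t'} => (v : E)) ∧
      ∃ c' : E → ℝ, (∀ v, 0 ≤ c' v) ∧ y = ∑ v ∈ B ∪ t', c' v • v := by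
  classical
  induction N with
  | zero =>
    intro t ht B c y hdisj hc hy
    have : t = ∅ := Finset.card_eq_zero.mp (Nat.le_zero.mp ht)
    subst this
    exact ⟨∅, le_refl _, linearIndependent_empty_type, c, hc, hy⟩
  | succ N ih =>
    intro t ht B c y hdisj hc hy
    by_cases hli : LinearIndependent ℝ (fun v : {x // x ∈ t} => (v : E))
    · exact ⟨t, le_refl _, hli, c, hc, hy⟩
    · -- extract a dependency with some positive coefficient
      obtain ⟨g, hg0, i0, hi0⟩ := Fintype.not_linearIndependent_iff.mp hli
      set d0 : E → ℝ := fun v => if h : v ∈ t then g ⟨v, h⟩ else 0 with hd0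
      have hd0sum : ∑ v ∈ t, d0 v • v = 0 := by
        rw [← Finset.sum_coe_sort t (fun v => d0 v • v)]
        rw [← hg0]
        exact Finset.sum_congr rfl (fun i _ => by simp [hd0, i.2])
      obtain ⟨d, hdsum, hdoff, x0, hx0t, hx0pos⟩ :
          ∃ d : E → ℝ, (∑ v ∈ t, d v • v = 0) ∧ (∀ v ∉ t, d v = 0) ∧
            ∃ x0 ∈ t, 0 < d x0 := by
        rcases lt_or_gt_of_ne hi0 with hneg | hposg
        · refine ⟨fun v => -(d0 v), by simp [hd0sum], fun v hv => by simp [hd0, hv], i0, i0.2, ?_⟩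
          simp only [hd0, i0.2, dif_pos, neg_pos]
          simpa using hneg
        · exact ⟨d0, hd0sum, fun v hv => by simp [hd0, hv], i0, i0.2, by
            simp only [hd0, i0.2, dif_pos]; simpa using hposg⟩
      -- minimum ratio
      set T : Finset (E) := t.filter (fun v => 0 < d v) with hT
      have hTne : T.Nonempty := ⟨x0, by simp [hT, hx0t, hx0pos]⟩
      set r : ℝ := T.inf' hTne (fun v => c v / d v) with hr
      obtain ⟨xs, hxsT, hxs⟩ := Finset.exists_mem_eq_inf' hTne (fun v => c v / d v)
      have hxst : xs ∈ t := (Finset.mem_filter.mp hxsT).1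
      have hdxs : 0 < d xs := (Finset.mem_filter.mp hxsT).2
      have hr0 : 0 ≤ r := by
        rw [hr, hxs]
        exact div_nonneg (hc xs) hdxs.le
      set c2 : E → ℝ := fun v => c v - r * d v with hc2
      have hc2nn : ∀ v, 0 ≤ c2 v := by
        intro v
        rcases le_or_gt (d v) 0 with h | h
        · have : r * d v ≤ 0 := mul_nonpos_of_nonneg_of_nonpos hr0 h
          simp only [hc2]; linarith [hc v]
        · have hvT : v ∈ T := by
            refine Finset.mem_filter.mpr ⟨?_, h⟩
            by_contra hvt
            exact absurd (hdoff v hvt) (ne_of_gt h)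
          have : r ≤ c v / d v := Finset.inf'_le _ hvT
          have := (le_div_iff₀ h).mp this
          simp only [hc2]; linarith
      have hc2xs : c2 xs = 0 := by
        simp only [hc2, hr, hxs]
        field_simp
        ring
      have hdB : ∀ v ∈ B, d v = 0 := fun v hv =>
        hdoff v (fun hvt => (Finset.disjoint_left.mp hdisj hv) hvt)
      have hsum2 : y = ∑ v ∈ B ∪ t, c2 v • v := by
        have : ∑ v ∈ B ∪ t, c2 v • v
            = ∑ v ∈ B ∪ t, c v • v - r • ∑ v ∈ B ∪ t, d v • v := by
          rw [Finset.smul_sum, ← Finset.sum_sub_distrib]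
          exact Finset.sum_congr rfl (fun v _ => by
            simp [hc2, sub_smul, smul_smul])
        have hdU : ∑ v ∈ B ∪ t, d v • v = 0 := by
          rw [Finset.sum_union hdisj, hdsum, add_zero]
          exact Finset.sum_eq_zero (fun v hv => by rw [hdB v hv, zero_smul])
        rw [this, hdU, smul_zero, sub_zero, ← hy]
      -- drop xs
      set t2 : Finset (E) := t.erase xs with ht2
      have hcard2 : t2.card ≤ N := by
        have h2 : t2.card < t.card := by
          rw [ht2]; exact Finset.card_erase_lt_of_mem hxst
        omega
      have hdisj2 : Disjoint B t2 := hdisj.mono_right (Finset.erase_subset _ _)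
      have hxsB : xs ∉ B := Finset.disjoint_right.mp hdisj hxst
      have hsum3 : y = ∑ v ∈ B ∪ t2, c2 v • v := by
        have hU : B ∪ t = insert xs (B ∪ t2) := by
          rw [ht2, Finset.union_comm B, Finset.union_comm B]
          rw [← Finset.insert_union, Finset.insert_erase hxst]
        rw [hsum2, hU, Finset.sum_insert (by
          simp only [Finset.mem_union, not_or]
          exact ⟨hxsB, Finset.notMem_erase _ _⟩)]
        rw [hc2xs, zero_smul, zero_add]
      obtain ⟨t', ht't2, hli', c', hc', hy'⟩ := ih t2 hcard2 B c2 y hdisj2 hc2nn hsum3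
      exact ⟨t', ht't2.trans (Finset.erase_subset _ _), hli', c', hc', hy'⟩

theorem stmt1 (n : ℕ) (U U' : Set (EuclideanSpace ℝ (Fin n))) (hfin : U.Finite)
    (hunit : ∀ u ∈ U, ‖u‖ = 1)
    (hpos : pos U = Set.univ)
    (hsub : U' ⊆ U)
    (hind : LinearIndependent ℝ (Subtype.val : U' → EuclideanSpace ℝ (Fin n)))
    (hspan : Submodule.span ℝ U' = ⊤) :
    ∃ (k : ℕ) (x : Fin k → EuclideanSpace ℝ (Fin n)), k ≤ n ∧
      (∀ i, x i ∈ U \ U') ∧ LinearIndependent ℝ x ∧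
      pos (U' ∪ Set.range x) = Set.univ ∧
      (U' ∪ Set.range x).ncard ≤ 2 * n := by
  classical
  have hU'fin : U'.Finite := hfin.subset hsub
  set B : Finset (EuclideanSpace ℝ (Fin n)) := hU'fin.toFinset with hBdef
  have hBU' : (↑B : Set (EuclideanSpace ℝ (Fin n))) = U' := hU'fin.coe_toFinset
  -- the negative of the sum of the basis lies in pos U
  have h1 : (-(∑ u ∈ B, u)) ∈ pos U := by rw [hpos]; trivial
  obtain ⟨s, c, hsU, hc, hsum⟩ := h1
  -- restructure the representation over B ∪ (s \ B)
  set t0 : Finset (EuclideanSpace ℝ (Fin n)) := s \ B with ht0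
  have hdisj0 : Disjoint B t0 := Finset.disjoint_sdiff
  set c0 : EuclideanSpace ℝ (Fin n) → ℝ := fun v => if v ∈ s then c v else 0 with hc0def
  have hc0 : ∀ v, 0 ≤ c0 v := fun v => by
    simp only [hc0def]; split <;> [exact hc v; exact le_rfl]
  have hsum0 : -(∑ u ∈ B, u) = ∑ v ∈ B ∪ t0, c0 v • v := by
    have hBt0 : B ∪ t0 = B ∪ s := by
      rw [ht0, Finset.union_sdiff_self_eq_union]
    rw [hBt0]
    have hsub' : s ⊆ B ∪ s := Finset.subset_union_right
    rw [← Finset.sum_subset hsub' (fun v _ hv => by simp [hc0def, hv])]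
    rw [hsum]
    exact Finset.sum_congr rfl (fun v hv => by simp [hc0def, hv])
  -- reduce to a linearly independent part
  obtain ⟨t, htt0, hli, c', hc', heq⟩ :=
    reduce_aux t0.card t0 le_rfl B c0 _ hdisj0 hc0 hsum0
  have hdisjBt : Disjoint B t := hdisj0.mono_right htt0
  have htUU' : (↑t : Set (EuclideanSpace ℝ (Fin n))) ⊆ U \ U' := by
    intro v hv
    have hvt0 : v ∈ t0 := htt0 hv
    rw [ht0, Finset.mem_sdiff] at hvt0
    refine ⟨hsU hvt0.1, fun hvU' => hvt0.2 ?_⟩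
    rw [← hBU'] at hvU'; exact hvU'
  -- enumerate t
  set k := t.card with hk
  set e := t.equivFin with he
  set x : Fin k → EuclideanSpace ℝ (Fin n) := fun i => ↑(e.symm i) with hx
  have hrange : Set.range x = ↑t := by
    ext v
    simp only [hx, Set.mem_range, Finset.mem_coe]
    constructor
    · rintro ⟨i, rfl⟩; exact (e.symm i).2
    · intro hv; exact ⟨e ⟨v, hv⟩, by simp [he]⟩
  have hxmem : ∀ i, x i ∈ U \ U' := fun i => htUU' (by rw [← hrange]; exact ⟨i, rfl⟩)
  have hxli : LinearIndependent ℝ x := hli.comp e.symm e.symm.injective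
  -- cardinality bounds
  have hfr : Module.finrank ℝ (EuclideanSpace ℝ (Fin n)) = n := finrank_euclideanSpace_fin
  have htn : k ≤ n := by
    have h := LinearIndependent.finset_card_le_finrank hli
    rwa [hfr] at h
  have hBli : LinearIndependent ℝ (fun v : {v // v ∈ B} => (v : EuclideanSpace ℝ (Fin n))) := by
    have hind' : LinearIndependent ℝ
        (Subtype.val : ↥(↑B : Set (EuclideanSpace ℝ (Fin n))) → EuclideanSpace ℝ (Fin n)) := by
      rw [hBU']; exact hind
    exact hind'
  have hBn : B.card ≤ n := by
    have h := LinearIndependent.finset_card_le_finrank hBli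
    rwa [hfr] at h
  -- the union as a finset
  have hUnion : U' ∪ Set.range x = ↑(B ∪ t) := by
    rw [Finset.coe_union, hBU', hrange]
  refine ⟨k, x, htn, hxmem, hxli, ?_, ?_⟩
  · -- positive spanning
    apply Set.eq_univ_of_forall
    intro y
    have hy : y ∈ Submodule.span ℝ (↑B : Set (EuclideanSpace ℝ (Fin n))) := by
      rw [hBU', hspan]; trivial
    obtain ⟨a, -, hay⟩ := Submodule.mem_span_finset.mp hy
    set M : ℝ := ∑ u ∈ B, |a u| with hM
    have hM0 : 0 ≤ M := Finset.sum_nonneg (fun u _ => abs_nonneg _)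
    have hMa : ∀ u ∈ B, |a u| ≤ M :=
      fun u hu => Finset.single_le_sum (fun v _ => abs_nonneg (a v)) hu
    set cF : EuclideanSpace ℝ (Fin n) → ℝ := fun v =>
      (if v ∈ B then a v + M * (1 + c' v) else 0) + (if v ∈ t then M * c' v else 0) with hcF
    refine ⟨B ∪ t, cF, by rw [hUnion], ?_, ?_⟩
    · intro v
      apply add_nonneg
      · split
        · next hvB =>
          have h1 := hMa v hvB
          have h2 := hc' v
          have := abs_nonneg (a v)
          nlinarith [neg_abs_le (a v)]
        · exact le_rfl
      · split
        · exact mul_nonneg hM0 (hc' _)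
        · exact le_rfl
    · -- sum computation
      have step1 : ∑ v ∈ B ∪ t, cF v • v
          = ∑ v ∈ B, (a v • v + M • v + M • (c' v • v)) + ∑ v ∈ t, M • (c' v • v) := by
        rw [Finset.sum_union hdisjBt]
        congr 1
        · refine Finset.sum_congr rfl (fun v hv => ?_)
          have hvt : v ∉ t := Finset.disjoint_left.mp hdisjBt hv
          simp only [hcF, if_pos hv, if_neg hvt, add_zero]
          rw [add_smul, mul_add, add_smul, mul_one, mul_smul]
          abel
        · refine Finset.sum_congr rfl (fun v hv => ?_)
          have hvB : v ∉ B := Finset.disjoint_right.mp hdisjBt hv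
          simp only [hcF, if_neg hvB, if_pos hv, zero_add, mul_smul]
      have step2 : ∑ v ∈ B, (a v • v + M • v + M • (c' v • v))
          = (∑ v ∈ B, a v • v) + M • (∑ v ∈ B, v) + M • (∑ v ∈ B, c' v • v) := by
        rw [Finset.sum_add_distrib, Finset.sum_add_distrib, Finset.smul_sum, Finset.smul_sum]
      have step3 : M • (∑ v ∈ B, c' v • v) + ∑ v ∈ t, M • (c' v • v)
          = M • (∑ v ∈ B ∪ t, c' v • v) := by
        rw [Finset.sum_union hdisjBt, smul_add, Finset.smul_sum, Finset.smul_sum]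
      have step4 : M • (∑ v ∈ B, v) + M • (∑ v ∈ B ∪ t, c' v • v) = 0 := by
        rw [← heq, ← smul_add, add_neg_cancel, smul_zero]
      have step5 : (∑ v ∈ B, a v • v) + M • (∑ v ∈ B, v) + M • (∑ v ∈ B, c' v • v)
            + ∑ v ∈ t, M • (c' v • v)
          = (∑ v ∈ B, a v • v)
            + (M • (∑ v ∈ B, v) + M • (∑ v ∈ B ∪ t, c' v • v)) := by
        rw [← step3]; abel
      calc y = ∑ v ∈ B, a v • v := hay.symm
        _ = ∑ v ∈ B ∪ t, cF v • v := by
            rw [step1, step2, step5, step4, add_zero]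
  · -- cardinality
    rw [hUnion, Set.ncard_coe_finset]
    calc (B ∪ t).card ≤ B.card + t.card := Finset.card_union_le _ _
      _ ≤ n + n := add_le_add hBn htn
      _ = 2 * n := by ring
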